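/- Let x_1, ..., x_n be natural numbers with g = gcd(x_1, ..., x_n). Then there exists N ≥ 0 such that for all k ≥ N with g dividing k, there exist λ_1, ..., λ_n ∈ ℕ with k = Σ_i λ_i x_i. -/

import Mathlib

lemma bezout_finset {ι : Type*} [DecidableEq ι] (s : Finset ι) (x : ι → ℕ) :
    ∃ c : ι → ℤ, ((s.gcd x : ℕ) : ℤ) = ∑ i ∈ s, c i * x i := by
  induction s using Finset.induction_on with
  | empty => exact ⟨0, by simp⟩
  | insert a s ha ih =>
    obtain ⟨c, hc⟩ := ih
    set A := Nat.gcdA (x a) (s.gcd x) with hA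
    set B := Nat.gcdB (x a) (s.gcd x) with hB
    refine ⟨fun i => if i = a then A else B * c i, ?_⟩
    rw [Finset.gcd_insert, Finset.sum_insert ha]
    have h2 : ((GCDMonoid.gcd (x a) (s.gcd x) : ℕ) : ℤ)
        = ((x a) : ℤ) * A + ((s.gcd x : ℕ) : ℤ) * B :=
      Nat.gcd_eq_gcd_ab (x a) (s.gcd x)
    rw [h2, hc]
    have hsum : ∑ i ∈ s, (if i = a then A else B * c i) * (x i : ℤ)
        = ∑ i ∈ s, B * (c i * (x i : ℤ)) := by
      refine Finset.sum_congr rfl fun i hi => ?_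
      rw [if_neg (fun hh : i = a => ha (hh ▸ hi))]
      ring
    simp only [if_pos rfl, if_true, hsum, ← Finset.mul_sum]
    ring

theorem stmt_5 (n : ℕ) (x : Fin n → ℕ) (g : ℕ)
    (hg : g = Finset.univ.gcd x) :
    ∃ N : ℕ, ∀ k ≥ N, g ∣ k →
      ∃ lam : Fin n → ℕ, k = ∑ i, lam i * x i := by
  rcases Nat.eq_zero_or_pos g with hg0 | hgpos
  · refine ⟨0, fun k _ hk => ⟨0, ?_⟩⟩
    rw [hg0] at hk
    obtain rfl := Nat.eq_zero_of_zero_dvd hk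
    simp
  · obtain ⟨c, hc⟩ := bezout_finset (Finset.univ : Finset (Fin n)) x
    rw [← hg] at hc
    set S := ∑ i, x i with hS
    have hgS : g ∣ S := Finset.dvd_sum fun i _ => hg ▸ Finset.gcd_dvd (Finset.mem_univ i)
    have hSpos : 0 < S := by
      rcases Nat.eq_zero_or_pos S with h | h
      · exfalso
        have hall : ∀ i ∈ Finset.univ, x i = 0 := fun i hi =>
          Nat.eq_zero_of_le_zero (h ▸ Finset.single_le_sum (f := x)
            (fun j _ => Nat.zero_le _) hi)
        have : Finset.univ.gcd x = 0 := Finset.gcd_eq_zero_iff.mpr hall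
        omega
      · exact h
    set s := S / g with hs
    have hsg : s * g = S := Nat.div_mul_cancel hgS
    have hspos : 0 < s := by
      rcases Nat.eq_zero_or_pos s with h | h
      · rw [h, zero_mul] at hsg; omega
      · exact h
    set C := ∑ i, (c i).natAbs with hC
    have hCb : ∀ i, (c i).natAbs ≤ C := by
      intro i
      rw [hC]
      exact Finset.single_le_sum (f := fun i => (c i).natAbs)
        (fun j _ => Nat.zero_le _) (Finset.mem_univ i)
    refine ⟨g * (s * (s * C + 1)), fun k hk hdvd => ?_⟩
    obtain ⟨q, rfl⟩ := hdvd
    have hq : s * (s * C + 1) ≤ q := Nat.le_of_mul_le_mul_left hk hgpos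
    set a := q / s with ha
    set r := q % s with hr
    have hqa : s * a + r = q := Nat.div_add_mod q s
    have hrs : r < s := Nat.mod_lt _ hspos
    have haC : s * C < a := by
      have : s * C + 1 ≤ q / s := (Nat.le_div_iff_mul_le hspos).mpr (by nlinarith)
      omega
    have hnonneg : ∀ i, (0 : ℤ) ≤ (a : ℤ) + r * c i := by
      intro i
      have h1 : -((r * (c i).natAbs : ℕ) : ℤ) ≤ (r : ℤ) * c i := by
        push_cast
        have := neg_abs_le (c i)
        have hr0 : (0:ℤ) ≤ (r:ℤ) := Int.ofNat_nonneg r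
        nlinarith [Int.abs_eq_natAbs (c i)]
      have h2 : r * (c i).natAbs ≤ s * C :=
        calc r * (c i).natAbs ≤ s * (c i).natAbs := Nat.mul_le_mul_right _ (le_of_lt hrs)
          _ ≤ s * C := Nat.mul_le_mul_left _ (hCb i)
      have h3 : ((r * (c i).natAbs : ℕ) : ℤ) ≤ (a : ℤ) := by
        exact_mod_cast le_of_lt (lt_of_le_of_lt h2 haC)
      linarith
    refine ⟨fun i => ((a : ℤ) + r * c i).toNat, ?_⟩
    have expand : ∑ i, ((a : ℤ) + r * c i) * (x i : ℤ)
        = (a : ℤ) * (S : ℤ) + (r : ℤ) * ∑ i, c i * (x i : ℤ) := by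
      rw [hS]
      push_cast
      rw [Finset.mul_sum, Finset.mul_sum, ← Finset.sum_add_distrib]
      exact Finset.sum_congr rfl fun i _ => by ring
    have key : (g : ℤ) * q = ∑ i, ((a : ℤ) + r * c i) * (x i : ℤ) := by
      rw [expand, ← hc]
      have hS' : (S : ℤ) = (s : ℤ) * (g : ℤ) := by exact_mod_cast hsg.symm
      have hq' : (q : ℤ) = (s : ℤ) * a + r := by exact_mod_cast hqa.symm
      rw [hS', hq']
      ring
    zify
    rw [key]
    exact Finset.sum_congr rfl fun i _ => by
      rw [Int.toNat_of_nonneg (hnonneg i)]
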